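/- Let k ≥ 3 and n ≥ 2 be integers, and for 1 ≤ i ≤ n−1 let η_i be the divisor on the hinge graph H_{k,n} with η_i(v_{i,1}) = 1, η_i(v_{i+1,1}) = −1 and η_i = 0 elsewhere. If a_1, …, a_{n−1} are integers with 0 ≤ a_i ≤ k−2 for all i and the divisor a_1·η_1 + ⋯ + a_{n−1}·η_{n−1} lies in Prin(H_{k,n}), then a_i = 0 for all i. -/

import Mathlib

/-- Vertex set of the hinge graph `H_{k,n}`: two shared vertices `u, w`
(encoded as `Sum.inl 0`, `Sum.inl 1`) together with the vertices
`v_{i,j}` (encoded as `Sum.inr (i, j)`, zero-indexed). -/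
abbrev HingeVertex (k n : ℕ) : Type := Fin 2 ⊕ (Fin n × Fin (k - 2))

/-- The shared vertex `u`. -/
def hu (k n : ℕ) : HingeVertex k n := Sum.inl 0

/-- The shared vertex `w`. -/
def hw (k n : ℕ) : HingeVertex k n := Sum.inl 1

/-- The vertex `v_{i+1,j+1}` of the `i+1`-st cycle (zero-indexed here). -/
def hv (k n : ℕ) (i : Fin n) (j : Fin (k - 2)) : HingeVertex k n := Sum.inr (i, j)

/-- The base (Boolean) edge relation of the hinge graph: `u-w`, `u-v_{i,1}`,
`v_{i,j}-v_{i,j+1}`, `v_{i,k-2}-w`. -/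
def hingeRelB (k n : ℕ) : HingeVertex k n → HingeVertex k n → Bool
  | Sum.inl a, Sum.inl b => a != b
  | Sum.inl a, Sum.inr p => a == 0 && p.2.val == 0
  | Sum.inr p, Sum.inl b => b == 1 && p.2.val == k - 3
  | Sum.inr p, Sum.inr q => p.1 == q.1 && q.2.val == p.2.val + 1

/-- The hinge graph `H_{k,n}`: `n` cycles of length `k` glued along the edge `{u, w}`. -/
def Hinge (k n : ℕ) : SimpleGraph (HingeVertex k n) :=
  SimpleGraph.fromRel (fun x y => hingeRelB k n x y = true)

instance (k n : ℕ) : DecidableRel (Hinge k n).Adj := fun x y =>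
  inferInstanceAs (Decidable (x ≠ y ∧ (hingeRelB k n x y = true ∨ hingeRelB k n y x = true)))

/-- The number of spanning trees of a graph `G`: the number of edge sets `s ⊆ E(G)`
whose associated spanning subgraph (on all of `V`) is connected and acyclic. -/
noncomputable def spanningTreeCount {V : Type*} (G : SimpleGraph V) : ℕ :=
  Set.ncard {s : Set (Sym2 V) | s ⊆ G.edgeSet ∧ (SimpleGraph.fromEdgeSet s).IsTree}

/-- The degree homomorphism on divisors. -/
def degHom (V : Type*) [Fintype V] : (V → ℤ) →+ ℤ where
  toFun D := ∑ v, D v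
  map_zero' := by simp
  map_add' x y := by simp [Finset.sum_add_distrib]

/-- The group `Div⁰` of degree-zero divisors. -/
def Div0 (V : Type*) [Fintype V] : AddSubgroup (V → ℤ) := (degHom V).ker

/-- The group of principal divisors: the image of the Laplacian `L = Deg - A`. -/
def Prin {V : Type*} [Fintype V] [DecidableEq V] (G : SimpleGraph V) [DecidableRel G.Adj] :
    AddSubgroup (V → ℤ) :=
  AddMonoidHom.range (Matrix.mulVecLin (G.lapMatrix ℤ)).toAddMonoidHom

/-- The critical group `K(G) = Div⁰(G) / Prin(G)`. -/
def CriticalGroup {V : Type*} [Fintype V] [DecidableEq V] (G : SimpleGraph V)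
    [DecidableRel G.Adj] : Type _ :=
  Div0 V ⧸ ((Prin G).addSubgroupOf (Div0 V))

noncomputable instance {V : Type*} [Fintype V] [DecidableEq V] (G : SimpleGraph V)
    [DecidableRel G.Adj] : AddCommGroup (CriticalGroup G) :=
  inferInstanceAs (AddCommGroup (Div0 V ⧸ ((Prin G).addSubgroupOf (Div0 V))))

/-- The class of a degree-zero divisor in the critical group. -/
def divisorClass {V : Type*} [Fintype V] [DecidableEq V] (G : SimpleGraph V)
    [DecidableRel G.Adj] (D : V → ℤ) (hD : D ∈ Div0 V) : CriticalGroup G :=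
  (QuotientAddGroup.mk (⟨D, hD⟩ : Div0 V) :
    Div0 V ⧸ ((Prin G).addSubgroupOf (Div0 V)))

/-- The divisor with value `1` at `x`, `-1` at `y` (for `x ≠ y`) and `0` elsewhere. -/
def pointDiff {V : Type*} [DecidableEq V] (x y : V) : V → ℤ :=
  fun z => (if z = x then 1 else 0) - (if z = y then 1 else 0)

lemma pointDiff_mem {V : Type*} [Fintype V] [DecidableEq V] (x y : V) :
    pointDiff x y ∈ Div0 V := by
  simp [Div0, AddMonoidHom.mem_ker, degHom, pointDiff, Finset.sum_sub_distrib]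


section HingeAux
open Finset Matrix SimpleGraph

private lemma hinge_lap_apply {V : Type*} [Fintype V] [DecidableEq V] (G : SimpleGraph V)
    [DecidableRel G.Adj] (y : V → ℤ) (v : V) :
    (G.lapMatrix ℤ *ᵥ y) v = ∑ z, if G.Adj v z then y v - y z else 0 := by
  rw [SimpleGraph.lapMatrix_mulVec_apply, ← Finset.sum_filter, ← neighborFinset_eq_filter,
    Finset.sum_sub_distrib, Finset.sum_const, SimpleGraph.degree]
  ring

private lemma hinge_sum_ite_fin_eq {k' : ℕ} (c : ℕ) (f : Fin k' → ℤ) :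
    ∑ j : Fin k', (if j.val = c then f j else 0) = if h : c < k' then f ⟨c, h⟩ else 0 := by
  split_ifs with h
  · rw [show (fun j : Fin k' => if j.val = c then f j else 0)
      = fun j => if j = ⟨c, h⟩ then f j else 0 by
        funext j; congr 1; simp [Fin.ext_iff]]
    simp
  · exact Finset.sum_eq_zero fun j _ => by
      have := j.isLt; rw [if_neg]; omega

private lemma hinge_sum_ite_fin_eq' {k' : ℕ} (c : ℕ) (f : Fin k' → ℤ) :
    ∑ j : Fin k', (if c = j.val + 1 then f j else 0) =
      if h : c - 1 < k' ∧ 1 ≤ c then f ⟨c - 1, h.1⟩ else 0 := by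
  split_ifs with h
  · rw [show (fun j : Fin k' => if c = j.val + 1 then f j else 0)
      = fun j => if j = ⟨c - 1, h.1⟩ then f j else 0 by
        funext j; congr 1; simp [Fin.ext_iff]; omega]
    simp
  · exact Finset.sum_eq_zero fun j _ => by
      have := j.isLt; rw [if_neg]; omega

/-- the slope of the test vector on branch `i`. -/
private def tv (k n : ℕ) (p i : Fin n) : ℤ := -1 + ((n:ℤ) + k - 1) * (if i = p then 1 else 0)

/-- the test vector associated to the branch `p`. -/
private def yf (k n : ℕ) (p : Fin n) : HingeVertex k n → ℤ
  | Sum.inl a => if a = 0 then 0 else -((k:ℤ) - 1)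
  | Sum.inr q => ((q.2:ℤ) + 1) * tv k n p q.1

private lemma yf_u (k n : ℕ) (p : Fin n) : yf k n p (Sum.inl 0) = 0 := by simp [yf]
private lemma yf_w (k n : ℕ) (p : Fin n) : yf k n p (Sum.inl 1) = -((k:ℤ) - 1) := by simp [yf]
private lemma yf_v (k n : ℕ) (p i : Fin n) (c : ℕ) (h : c < k - 2) :
    yf k n p (Sum.inr (i, ⟨c, h⟩)) = ((c:ℤ) + 1) * tv k n p i := by simp [yf]

private lemma hinge_lap_u (k n : ℕ) (hk : 3 ≤ k) (hn : 2 ≤ n) (p : Fin n) :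
    ((Hinge k n).lapMatrix ℤ *ᵥ yf k n p) (Sum.inl 0) = 0 := by
  rw [hinge_lap_apply]
  rw [Fintype.sum_sum_type, Fin.sum_univ_two, Fintype.sum_prod_type]
  have h1 : ∀ a : Fin 2, (Hinge k n).Adj (Sum.inl 0) (Sum.inl a) ↔ a = 1 := by
    intro a
    constructor
    · rintro ⟨h1, h2⟩; simp [hingeRelB] at h2; omega
    · rintro rfl; exact ⟨by simp, Or.inl (by simp [hingeRelB])⟩
  have h2 : ∀ (i : Fin n) (j : Fin (k-2)),
      (Hinge k n).Adj (Sum.inl 0) (Sum.inr (i, j)) ↔ j.val = 0 := by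
    intro i j; simp [Hinge, hingeRelB]
  simp only [h1, h2]
  norm_num
  rw [show (fun i : Fin n => ∑ j : Fin (k-2),
      if j.val = 0 then yf k n p (Sum.inl 0) - yf k n p (Sum.inr (i, j)) else 0)
    = fun i => -tv k n p i by
      funext i
      rw [hinge_sum_ite_fin_eq 0 (fun j => yf k n p (Sum.inl 0) - yf k n p (Sum.inr (i, j)))]
      rw [dif_pos (by omega)]
      simp [yf]]
  have key : ∑ x : Fin n, -tv k n p x = (n:ℤ) - ((n:ℤ) + k - 1) := by
    have h : ∀ x : Fin n, -tv k n p x = 1 + (if x = p then -((n:ℤ) + k - 1) else 0) := by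
      intro x; simp only [tv]; split_ifs <;> ring
    simp [h, Finset.sum_add_distrib, Finset.sum_ite_eq']
    ring
  rw [key]
  simp [yf]
  ring

private lemma hinge_lap_w (k n : ℕ) (hk : 3 ≤ k) (hn : 2 ≤ n) (p : Fin n) :
    ((k:ℤ) - 1) * ((n:ℤ) + k - 1) ∣ ((Hinge k n).lapMatrix ℤ *ᵥ yf k n p) (Sum.inl 1) := by
  rw [hinge_lap_apply, Fintype.sum_sum_type, Fin.sum_univ_two, Fintype.sum_prod_type]
  have h1 : ∀ a : Fin 2, (Hinge k n).Adj (Sum.inl 1) (Sum.inl a) ↔ a = 0 := by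
    intro a
    constructor
    · rintro ⟨h1, h2⟩; simp [hingeRelB] at h2; omega
    · rintro rfl; exact ⟨by simp, Or.inr (by simp [hingeRelB])⟩
  have h2 : ∀ (i : Fin n) (j : Fin (k-2)),
      (Hinge k n).Adj (Sum.inl 1) (Sum.inr (i, j)) ↔ j.val = k - 3 := by
    intro i j; simp [Hinge, hingeRelB]
  simp only [h1, h2]
  norm_num
  rw [show (fun i : Fin n => ∑ j : Fin (k-2),
      if j.val = k - 3 then yf k n p (Sum.inl 1) - yf k n p (Sum.inr (i, j)) else 0)
    = fun i => -((k:ℤ) - 1) - ((k:ℤ) - 2) * tv k n p i by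
      funext i
      rw [hinge_sum_ite_fin_eq (k-3) (fun j => yf k n p (Sum.inl 1) - yf k n p (Sum.inr (i, j)))]
      rw [dif_pos (by omega)]
      simp only [yf]
      rw [show ((⟨k-3, by omega⟩ : Fin (k-2)) : ℤ) = (k:ℤ) - 3 by simp; omega,
        if_neg (by decide : ¬ (1 : Fin 2) = 0)]
      ring]
  have key : ∑ i : Fin n, (-((k:ℤ) - 1) - ((k:ℤ) - 2) * tv k n p i)
      = -((k:ℤ)-1) * n - ((k:ℤ)-2) * (-(n:ℤ) + ((n:ℤ)+k-1)) := by
    have h : ∀ x : Fin n, (-((k:ℤ) - 1) - ((k:ℤ) - 2) * tv k n p x)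
        = (-((k:ℤ)-1) + (k:ℤ)-2) + (if x = p then -(((k:ℤ)-2)*((n:ℤ)+k-1)) else 0) := by
      intro x; simp only [tv]; split_ifs <;> ring
    rw [Finset.sum_congr rfl (fun x _ => h x), Finset.sum_add_distrib]
    simp [Finset.sum_ite_eq']
    ring
  rw [key]
  refine ⟨-1, by simp [yf]; ring⟩

private lemma hinge_lap_v (k n : ℕ) (hk : 3 ≤ k) (hn : 2 ≤ n) (p i : Fin n) (j : Fin (k-2)) :
    ((k:ℤ) - 1) * ((n:ℤ) + k - 1) ∣ ((Hinge k n).lapMatrix ℤ *ᵥ yf k n p) (Sum.inr (i, j)) := by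
  have hjlt := j.isLt
  rw [hinge_lap_apply, Fintype.sum_sum_type, Fin.sum_univ_two, Fintype.sum_prod_type]
  have h1 : ∀ a : Fin 2, (Hinge k n).Adj (Sum.inr (i, j)) (Sum.inl a) ↔
      (a = 0 ∧ j.val = 0) ∨ (a = 1 ∧ j.val = k-3) := by
    intro a; simp [Hinge, hingeRelB]; tauto
  have h2 : ∀ (i' : Fin n) (j' : Fin (k-2)),
      (Hinge k n).Adj (Sum.inr (i, j)) (Sum.inr (i', j')) ↔
        i' = i ∧ (j'.val = j.val + 1 ∨ j.val = j'.val + 1) := by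
    intro i' j'
    constructor
    · rintro ⟨hne, h | h⟩ <;> simp [hingeRelB] at h
      · exact ⟨h.1.symm, Or.inl h.2⟩
      · exact ⟨h.1, Or.inr h.2⟩
    · rintro ⟨rfl, h | h⟩
      · exact ⟨by simp [Prod.ext_iff, Fin.ext_iff]; omega, Or.inl (by simp [hingeRelB]; omega)⟩
      · exact ⟨by simp [Prod.ext_iff, Fin.ext_iff]; omega, Or.inr (by simp [hingeRelB]; omega)⟩
  simp only [h1, h2, ite_and]
  norm_num
  have split : ∀ j' : Fin (k-2),
      (if j'.val = j.val + 1 ∨ j.val = j'.val + 1 then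
        yf k n p (Sum.inr (i, j)) - yf k n p (Sum.inr (i, j')) else 0)
      = (if j'.val = j.val + 1 then yf k n p (Sum.inr (i, j)) - yf k n p (Sum.inr (i, j')) else 0)
      + (if j.val = j'.val + 1 then yf k n p (Sum.inr (i, j)) - yf k n p (Sum.inr (i, j')) else 0) := by
    intro j'; split_ifs with h1' h2' h3' <;> first | omega | ring | (exfalso; omega) | tauto
  rw [Finset.sum_congr rfl (fun j' _ => split j'), Finset.sum_add_distrib,
    hinge_sum_ite_fin_eq (j.val+1), hinge_sum_ite_fin_eq' j.val]
  have hyv : yf k n p (Sum.inr (i, j)) = ((j.val : ℤ) + 1) * tv k n p i := by simp [yf]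
  by_cases hend : j.val = k - 3
  · refine ⟨if i = p then 1 else 0, ?_⟩
    rw [dif_neg (by omega : ¬ (j.val + 1 < k - 2))]
    by_cases h0 : j.val = 0
    · have hk3 : k = 3 := by omega
      rw [dif_neg (by omega : ¬ (j.val - 1 < k - 2 ∧ 1 ≤ j.val)), if_pos h0, if_pos hend,
        yf_u, yf_w, hyv]
      have hj : ((j.val : ℕ) : ℤ) = 0 := by omega
      rw [hj]
      simp only [tv]
      split_ifs <;> push_cast <;> subst hk3 <;> push_cast <;> ring
    · rw [dif_pos (by omega : j.val - 1 < k - 2 ∧ 1 ≤ j.val), if_neg (by omega), if_pos hend,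
        yf_w, hyv, yf_v]
      have hj : ((j.val : ℕ) : ℤ) = (k : ℤ) - 3 := by omega
      have hj' : ((j.val - 1 : ℕ) : ℤ) = (k : ℤ) - 4 := by omega
      rw [hj, hj']
      simp only [tv]
      split_ifs <;> push_cast <;> ring
  · refine ⟨0, ?_⟩
    rw [dif_pos (by omega : j.val + 1 < k - 2), if_neg hend, hyv, yf_v]
    have hj1 : ((j.val + 1 : ℕ) : ℤ) = (j.val : ℤ) + 1 := by omega
    rw [hj1]
    by_cases h0 : j.val = 0
    · rw [dif_neg (by omega : ¬ (j.val - 1 < k - 2 ∧ 1 ≤ j.val)), if_pos h0, yf_u]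
      have hj0 : ((j.val : ℕ) : ℤ) = 0 := by omega
      rw [hj0]; ring
    · rw [dif_pos (by omega : j.val - 1 < k - 2 ∧ 1 ≤ j.val), if_neg h0, yf_v]
      have hj' : ((j.val - 1 : ℕ) : ℤ) = (j.val : ℤ) - 1 := by omega
      rw [hj']
      ring

private lemma hinge_pairing_eval (k n : ℕ) (hk : 3 ≤ k) (hn : 2 ≤ n)
    (a : Fin (n - 1) → ℤ) (p : Fin (n-1)) :
    (yf k n ⟨p.val, Nat.lt_of_lt_of_le p.isLt (Nat.sub_le n 1)⟩) ⬝ᵥ (∑ i : Fin (n - 1), a i •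
        pointDiff (hv k n ⟨i.val, Nat.lt_of_lt_of_le i.isLt (Nat.sub_le n 1)⟩ ⟨0, by have := hk; omega⟩)
          (hv k n ⟨i.val + 1, Nat.add_lt_of_lt_sub i.isLt⟩ ⟨0, by have := hk; omega⟩))
      = ((n:ℤ) + k - 1) *
        (a p - if h : p.val - 1 < n - 1 ∧ 1 ≤ p.val then a ⟨p.val - 1, h.1⟩ else 0) := by
  set P : Fin n := ⟨p.val, Nat.lt_of_lt_of_le p.isLt (Nat.sub_le n 1)⟩ with hP
  rw [dotProduct]
  have step1 : ∀ v, (∑ i : Fin (n - 1), a i •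
        pointDiff (hv k n ⟨i.val, Nat.lt_of_lt_of_le i.isLt (Nat.sub_le n 1)⟩ ⟨0, by have := hk; omega⟩)
          (hv k n ⟨i.val + 1, Nat.add_lt_of_lt_sub i.isLt⟩ ⟨0, by have := hk; omega⟩)) v
      = ∑ i : Fin (n-1), a i *
        pointDiff (hv k n ⟨i.val, Nat.lt_of_lt_of_le i.isLt (Nat.sub_le n 1)⟩ ⟨0, by have := hk; omega⟩)
          (hv k n ⟨i.val + 1, Nat.add_lt_of_lt_sub i.isLt⟩ ⟨0, by have := hk; omega⟩) v := by
    intro v; simp [Finset.sum_apply]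
  simp only [step1, Finset.mul_sum]
  rw [Finset.sum_comm]
  have inner : ∀ q : Fin (n-1),
      (∑ v, yf k n P v * (a q *
        pointDiff (hv k n ⟨q.val, Nat.lt_of_lt_of_le q.isLt (Nat.sub_le n 1)⟩ ⟨0, by have := hk; omega⟩)
          (hv k n ⟨q.val + 1, Nat.add_lt_of_lt_sub q.isLt⟩ ⟨0, by have := hk; omega⟩ ) v))
      = ((n:ℤ)+k-1) *
        ((if q.val = p.val then a q else 0) - (if p.val = q.val + 1 then a q else 0)) := by
    intro q
    have e1 : ∀ (x0 y0 : HingeVertex k n),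
        (∑ v, yf k n P v * (a q * pointDiff x0 y0 v)) = a q * (yf k n P x0 - yf k n P y0) := by
      intro x0 y0
      have pw : ∀ v, yf k n P v * (a q * pointDiff x0 y0 v)
          = (if v = x0 then a q * yf k n P v else 0)
            - (if v = y0 then a q * yf k n P v else 0) := by
        intro v; simp only [pointDiff]; split_ifs <;> ring
      rw [Finset.sum_congr rfl fun v _ => pw v, Finset.sum_sub_distrib,
        Finset.sum_ite_eq' Finset.univ x0 (fun v => a q * yf k n P v),
        Finset.sum_ite_eq' Finset.univ y0 (fun v => a q * yf k n P v)]
      simp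
      ring
    rw [e1]
    simp only [hv, yf_v]
    norm_num
    simp only [tv, hP, Fin.mk.injEq]
    split_ifs <;> first | omega | ring
  rw [Finset.sum_congr rfl (fun q _ => inner q)]
  rw [← Finset.mul_sum]
  congr 1
  have sp : ∀ q : Fin (n-1),
      ((if q.val = p.val then a q else 0) - (if p.val = q.val + 1 then a q else 0))
      = (if q.val = p.val then a q else 0) + (-(if p.val = q.val + 1 then a q else 0)) :=
    fun q => by ring
  simp only [sp]
  rw [Finset.sum_add_distrib, hinge_sum_ite_fin_eq p.val a,
    show (fun q : Fin (n-1) => -(if p.val = q.val + 1 then a q else 0))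
      = fun q => (if p.val = q.val + 1 then -(a q) else 0) by funext q; split_ifs <;> ring]
  rw [hinge_sum_ite_fin_eq' p.val (fun q => -(a q))]
  rw [dif_pos p.isLt]
  simp only [Fin.eta]
  split_ifs <;> ring

private lemma hinge_small_dvd_zero (K z : ℤ) (hK : 1 ≤ K) (h : K ∣ z) (h0 : 0 ≤ z)
    (h1 : z ≤ K - 1) : z = 0 := by
  obtain ⟨c, rfl⟩ := h
  rcases lt_trichotomy c 0 with h' | rfl | h'
  · nlinarith
  · ring
  · nlinarith

end HingeAux

/-- Let `k ≥ 3`, `n ≥ 2`, and for `1 ≤ i ≤ n-1` let `η_i` be the divisor with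
value `1` at `v_{i,1}`, `-1` at `v_{i+1,1}` and `0` elsewhere. If integers `a_i` with
`0 ≤ a_i ≤ k - 2` make `a_1 • η_1 + ⋯ + a_{n-1} • η_{n-1}` principal, then all `a_i = 0`. -/
theorem hinge_eta_linearIndependent (k n : ℕ) (hk : 3 ≤ k) (hn : 2 ≤ n)
    (a : Fin (n - 1) → ℤ) (ha : ∀ i, 0 ≤ a i ∧ a i ≤ (k : ℤ) - 2)
    (hmem : (∑ i : Fin (n - 1), a i •
        pointDiff (hv k n ⟨i.val, by have := i.isLt; omega⟩ ⟨0, by omega⟩)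
          (hv k n ⟨i.val + 1, by have := i.isLt; omega⟩ ⟨0, by omega⟩)) ∈
      Prin (Hinge k n)) :
    ∀ i, a i = 0 := by
  classical
  obtain ⟨x, hx⟩ := hmem
  have hx' : Matrix.mulVec ((Hinge k n).lapMatrix ℤ) x = (∑ i : Fin (n - 1), a i •
      pointDiff (hv k n ⟨i.val, by have := i.isLt; omega⟩ ⟨0, by omega⟩)
        (hv k n ⟨i.val + 1, by have := i.isLt; omega⟩ ⟨0, by omega⟩)) := hx
  have hdvd : ∀ P : Fin n, ((k:ℤ) - 1) * ((n:ℤ) + k - 1) ∣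
      dotProduct (yf k n P) (∑ i : Fin (n - 1), a i •
        pointDiff (hv k n ⟨i.val, by have := i.isLt; omega⟩ ⟨0, by omega⟩)
          (hv k n ⟨i.val + 1, by have := i.isLt; omega⟩ ⟨0, by omega⟩)) := by
    intro P
    rw [← hx', Matrix.dotProduct_mulVec]
    have hsym : Matrix.transpose ((Hinge k n).lapMatrix ℤ) = (Hinge k n).lapMatrix ℤ :=
      SimpleGraph.isSymm_lapMatrix (G := Hinge k n) (R := ℤ)
    rw [← hsym, Matrix.vecMul_transpose]
    rw [dotProduct]
    refine Finset.dvd_sum fun v _ => dvd_mul_of_dvd_left ?_ _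
    rcases v with a' | ⟨i, j⟩
    · have : a' = 0 ∨ a' = 1 := by omega
      rcases this with rfl | rfl
      · rw [hinge_lap_u k n hk hn P]; exact dvd_zero _
      · exact hinge_lap_w k n hk hn P
    · exact hinge_lap_v k n hk hn P i j
  have hdiff : ∀ p : Fin (n - 1), ((k:ℤ) - 1) ∣
      (a p - if h : p.val - 1 < n - 1 ∧ 1 ≤ p.val then a ⟨p.val - 1, h.1⟩ else 0) := by
    intro p
    have h1 := hdvd ⟨p.val, by have := p.isLt; omega⟩
    rw [hinge_pairing_eval k n hk hn a p] at h1
    have hM : ((n:ℤ) + k - 1) ≠ 0 := by omega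
    rw [mul_comm ((k:ℤ) - 1) ((n:ℤ) + k - 1)] at h1
    exact (mul_dvd_mul_iff_left hM).mp h1
  have key : ∀ m : ℕ, ∀ p : Fin (n - 1), p.val ≤ m → a p = 0 := by
    intro m
    induction m with
    | zero =>
      intro p hp
      have h := hdiff p
      rw [dif_neg (by omega)] at h
      rw [sub_zero] at h
      exact hinge_small_dvd_zero ((k:ℤ) - 1) (a p) (by omega) h (ha p).1
        (by have := (ha p).2; omega)
    | succ m ih =>
      intro p hp
      rcases Nat.lt_or_ge p.val (m+1) with hlt | hge
      · exact ih p (by omega)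
      · have hp1 : p.val = m + 1 := by omega
        have h := hdiff p
        rw [dif_pos (by omega : p.val - 1 < n - 1 ∧ 1 ≤ p.val)] at h
        rw [ih ⟨p.val - 1, by omega⟩ (show p.val - 1 ≤ m by omega)] at h
        rw [sub_zero] at h
        exact hinge_small_dvd_zero ((k:ℤ) - 1) (a p) (by omega) h (ha p).1
          (by have := (ha p).2; omega)
  intro i
  exact key i.val i le_rfl
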